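/- If HA + Σ_k-LEM proves a formula φ, then HA^* + Σ_k-LEM proves the Friedman A-translation φ^*. -/
import Mathlib


namespace SemiClassicalArith

/-- Terms of arithmetic: variables (de Bruijn indices) and function symbols
(one symbol of each arity for every code, covering all primitive recursive functions). -/
inductive Term : Type
  | var : ℕ → Term
  | func : (code : ℕ) → (arity : ℕ) → (Fin arity → Term) → Term

namespace Term

/-- Shift all variables `≥ d` up by one. -/
def lift (d : ℕ) : Term → Term
  | var n => if n < d then var n else var (n + 1)
  | func c a ts => func c a fun i => (ts i).lift d

/-- Binder-removing substitution of `s` for variable `k`. -/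
def subst (k : ℕ) (s : Term) : Term → Term
  | var n => if n < k then var n else if n = k then s else var (n - 1)
  | func c a ts => func c a fun i => Term.subst k s (ts i)

/-- In-place replacement of variable `k` by `s` (no shifting of other variables). -/
def repl (k : ℕ) (s : Term) : Term → Term
  | var n => if n = k then s else var n
  | func c a ts => func c a fun i => Term.repl k s (ts i)

/-- Free variables of a term. -/
def fv : Term → Finset ℕ
  | var n => {n}
  | func _ _ ts => Finset.univ.sup fun i => (ts i).fv

/-- The constant zero (function symbol of arity 0, code 0). -/
def zero : Term := func 0 0 (fun i => i.elim0)

/-- Successor (function symbol of arity 1, code 1). -/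
def succ (t : Term) : Term := func 1 1 (fun _ => t)

end Term

/-- Formulas of arithmetic in the language with an extra nullary predicate
symbol `$` (`dollar`), used as a place holder. Quantifiers use de Bruijn indices. -/
inductive Formula : Type
  | falsum : Formula
  | dollar : Formula
  | eq : Term → Term → Formula
  | and : Formula → Formula → Formula
  | or : Formula → Formula → Formula
  | imp : Formula → Formula → Formula
  | all : Formula → Formula
  | ex : Formula → Formula

namespace Formula

def neg (φ : Formula) : Formula := φ.imp falsum

def iff (φ ψ : Formula) : Formula := (φ.imp ψ).and (ψ.imp φ)

/-- `¬_$ φ`, i.e. `φ → $`. -/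
def negD (φ : Formula) : Formula := φ.imp dollar

def lift (d : ℕ) : Formula → Formula
  | falsum => falsum
  | dollar => dollar
  | eq t u => eq (t.lift d) (u.lift d)
  | and φ ψ => and (φ.lift d) (ψ.lift d)
  | or φ ψ => or (φ.lift d) (ψ.lift d)
  | imp φ ψ => imp (φ.lift d) (ψ.lift d)
  | all φ => all (φ.lift (d + 1))
  | ex φ => ex (φ.lift (d + 1))

/-- Binder-removing substitution of term `s` for variable `k`. -/
def subst (k : ℕ) (s : Term) : Formula → Formula
  | falsum => falsum
  | dollar => dollar
  | eq t u => eq (Term.subst k s t) (Term.subst k s u)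
  | and φ ψ => and (Formula.subst k s φ) (Formula.subst k s ψ)
  | or φ ψ => or (Formula.subst k s φ) (Formula.subst k s ψ)
  | imp φ ψ => imp (Formula.subst k s φ) (Formula.subst k s ψ)
  | all φ => all (Formula.subst (k + 1) (s.lift 0) φ)
  | ex φ => ex (Formula.subst (k + 1) (s.lift 0) φ)

/-- In-place replacement of variable `k` by term `s`. -/
def repl (k : ℕ) (s : Term) : Formula → Formula
  | falsum => falsum
  | dollar => dollar
  | eq t u => eq (Term.repl k s t) (Term.repl k s u)
  | and φ ψ => and (Formula.repl k s φ) (Formula.repl k s ψ)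
  | or φ ψ => or (Formula.repl k s φ) (Formula.repl k s ψ)
  | imp φ ψ => imp (Formula.repl k s φ) (Formula.repl k s ψ)
  | all φ => all (Formula.repl (k + 1) (s.lift 0) φ)
  | ex φ => ex (Formula.repl (k + 1) (s.lift 0) φ)

/-- Free variables of a formula. -/
def fv : Formula → Finset ℕ
  | falsum => ∅
  | dollar => ∅
  | eq t u => t.fv ∪ u.fv
  | and φ ψ => φ.fv ∪ ψ.fv
  | or φ ψ => φ.fv ∪ ψ.fv
  | imp φ ψ => φ.fv ∪ ψ.fv
  | all φ => (φ.fv.erase 0).image (· - 1)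
  | ex φ => (φ.fv.erase 0).image (· - 1)

/-- A sentence is a formula with no free variables. -/
def sentence (φ : Formula) : Prop := φ.fv = ∅

/-- The formula is in the language of `HA` (the placeholder `$` does not occur). -/
def noDollar : Formula → Prop
  | falsum => True
  | dollar => False
  | eq _ _ => True
  | and φ ψ => φ.noDollar ∧ ψ.noDollar
  | or φ ψ => φ.noDollar ∧ ψ.noDollar
  | imp φ ψ => φ.noDollar ∧ ψ.noDollar
  | all φ => φ.noDollar
  | ex φ => φ.noDollar

/-- Quantifier-free formula of `HA`. -/
def isQF : Formula → Prop
  | falsum => True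
  | dollar => False
  | eq _ _ => True
  | and φ ψ => φ.isQF ∧ ψ.isQF
  | or φ ψ => φ.isQF ∧ ψ.isQF
  | imp φ ψ => φ.isQF ∧ ψ.isQF
  | all _ => False
  | ex _ => False

/-- Flip `+`/`-` in an alternation path (`true` = `+`, `false` = `-`). -/
def pflip (s : List Bool) : List Bool := s.map (!·)

/-- The set of alternation paths of a formula (Akama–Berardi–Hayashi–Kohlenbach). -/
def alt : Formula → Finset (List Bool)
  | falsum => {([] : List Bool)}
  | dollar => {([] : List Bool)}
  | eq _ _ => {([] : List Bool)}
  | and φ ψ => φ.alt ∪ ψ.alt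
  | or φ ψ => φ.alt ∪ ψ.alt
  | imp φ ψ => φ.alt.image pflip ∪ ψ.alt
  | all φ => φ.alt.image (fun s => if s.head? = some false then s else false :: s)
  | ex φ => φ.alt.image (fun s => if s.head? = some true then s else true :: s)

/-- The degree of a formula: the maximal length of its alternation paths. -/
def degree (φ : Formula) : ℕ := φ.alt.sup List.length

/-- The class `U_k` (for `k ≥ 1`: degree `k` and all maximal paths begin with `-`;
`U_0` is the class of degree-`0` formulas). -/
def inU (k : ℕ) (φ : Formula) : Prop :=
  φ.degree = k ∧ ∀ s ∈ φ.alt, s.length = k → k = 0 ∨ s.head? = some false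

/-- The class `E_k` (for `k ≥ 1`: degree `k` and all maximal paths begin with `+`;
`E_0` is the class of degree-`0` formulas). -/
def inE (k : ℕ) (φ : Formula) : Prop :=
  φ.degree = k ∧ ∀ s ∈ φ.alt, s.length = k → k = 0 ∨ s.head? = some true

/-- The dual of a prenex formula: swap quantifiers and negate the matrix. -/
def dual : Formula → Formula
  | all φ => ex φ.dual
  | ex φ => all φ.dual
  | φ => φ.neg

/-- The `$`-translation (Ishihara's generalized negative translation). -/
def dollarTr : Formula → Formula
  | falsum => dollar
  | dollar => dollar
  | eq t u => (eq t u).negD.negD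
  | and φ ψ => and φ.dollarTr ψ.dollarTr
  | or φ ψ => (or φ.dollarTr ψ.dollarTr).negD.negD
  | imp φ ψ => imp φ.dollarTr ψ.dollarTr
  | all φ => all φ.dollarTr
  | ex φ => (ex φ.dollarTr).negD.negD

/-- The Friedman A-translation: replace every prime formula `P` (including `⊥`)
by `P ∨ *` (here `*` is the placeholder `dollar`). -/
def aTr : Formula → Formula
  | falsum => or falsum dollar
  | dollar => dollar
  | eq t u => or (eq t u) dollar
  | and φ ψ => and φ.aTr ψ.aTr
  | or φ ψ => or φ.aTr ψ.aTr
  | imp φ ψ => imp φ.aTr ψ.aTr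
  | all φ => all φ.aTr
  | ex φ => ex φ.aTr

/-- Prefix `n` universal quantifiers. -/
def allN : Formula → ℕ → Formula
  | φ, 0 => φ
  | φ, n + 1 => Formula.allN φ.all n

/-- The universal closure of a formula. -/
def univClosure (φ : Formula) : Formula := φ.allN (φ.fv.sup Nat.succ)

end Formula

mutual
  /-- The class `Σ_k` of prenex formulas. -/
  inductive IsSigma : ℕ → Formula → Prop
    | qf {φ : Formula} : φ.isQF → IsSigma 0 φ
    | ofPi {k : ℕ} {φ : Formula} : IsPi k φ → IsSigma (k + 1) φ
    | ex {k : ℕ} {φ : Formula} : IsSigma (k + 1) φ → IsSigma (k + 1) φ.ex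
  /-- The class `Π_k` of prenex formulas. -/
  inductive IsPi : ℕ → Formula → Prop
    | qf {φ : Formula} : φ.isQF → IsPi 0 φ
    | ofSigma {k : ℕ} {φ : Formula} : IsSigma k φ → IsPi (k + 1) φ
    | all {k : ℕ} {φ : Formula} : IsPi (k + 1) φ → IsPi (k + 1) φ.all
end

/-- Axioms of Heyting arithmetic `HA` (Hilbert style intuitionistic predicate logic
with equality, plus arithmetical axioms and the induction scheme). -/
inductive HAAx : Formula → Prop
  | axK (φ ψ : Formula) : HAAx (φ.imp (ψ.imp φ))
  | axS (φ ψ χ : Formula) : HAAx ((φ.imp (ψ.imp χ)).imp ((φ.imp ψ).imp (φ.imp χ)))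
  | andI (φ ψ : Formula) : HAAx (φ.imp (ψ.imp (φ.and ψ)))
  | andE1 (φ ψ : Formula) : HAAx ((φ.and ψ).imp φ)
  | andE2 (φ ψ : Formula) : HAAx ((φ.and ψ).imp ψ)
  | orI1 (φ ψ : Formula) : HAAx (φ.imp (φ.or ψ))
  | orI2 (φ ψ : Formula) : HAAx (ψ.imp (φ.or ψ))
  | orE (φ ψ χ : Formula) : HAAx ((φ.imp χ).imp ((ψ.imp χ).imp ((φ.or ψ).imp χ)))
  | efq (φ : Formula) : HAAx (Formula.falsum.imp φ)
  | allE (φ : Formula) (t : Term) : HAAx (φ.all.imp (φ.subst 0 t))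
  | exI (φ : Formula) (t : Term) : HAAx ((φ.subst 0 t).imp φ.ex)
  | allK (φ ψ : Formula) : HAAx ((φ.imp ψ).all.imp (φ.all.imp ψ.all))
  | allVac (φ : Formula) : HAAx (φ.imp (φ.lift 0).all)
  | exE (φ ψ : Formula) : HAAx ((φ.imp (ψ.lift 0)).all.imp (φ.ex.imp ψ))
  | eqRefl (t : Term) : HAAx (Formula.eq t t)
  | eqSubst (t u : Term) (φ : Formula) : HAAx ((Formula.eq t u).imp ((φ.subst 0 t).imp (φ.subst 0 u)))
  | succNeZero (t : Term) : HAAx (Formula.neg (Formula.eq (Term.succ t) Term.zero))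
  | succInj (t u : Term) : HAAx ((Formula.eq (Term.succ t) (Term.succ u)).imp (Formula.eq t u))
  | ind (φ : Formula) : HAAx ((φ.subst 0 Term.zero).imp
      ((((φ.imp (φ.repl 0 (Term.succ (Term.var 0))))).all).imp φ.all))
  | atomDec (t u : Term) : HAAx ((Formula.eq t u).or (Formula.eq t u).neg)

/-- Provability from `HA` (in the language possibly containing `$`)
together with the extra axioms `T`. -/
inductive Proves (T : Set Formula) : Formula → Prop
  | ax {φ : Formula} : φ ∈ T → Proves T φ
  | ha {φ : Formula} : HAAx φ → Proves T φ
  | mp {φ ψ : Formula} : Proves T (φ.imp ψ) → Proves T φ → Proves T ψ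
  | gen {φ : Formula} : Proves T φ → Proves T φ.all

/-- The scheme `Σ_k-LEM`. -/
def sigLEM (k : ℕ) : Set Formula := {ψ | ∃ φ : Formula, IsSigma k φ ∧ ψ = φ.or φ.neg}

/-- The full law of excluded middle for `HA`-formulas; `Proves lemSet` is `PA`-provability. -/
def lemSet : Set Formula := {ψ | ∃ φ : Formula, φ.noDollar ∧ ψ = φ.or φ.neg}

/-- The scheme `F_k-LEM`: excluded middle for `HA`-formulas of degree at most `k`. -/
def fLEM (k : ℕ) : Set Formula :=
  {ψ | ∃ φ : Formula, φ.noDollar ∧ φ.degree ≤ k ∧ ψ = φ.or φ.neg}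

/-- `T` is (the set of extra axioms of) a semi-classical arithmetic:
`HA ⊆ HA + T ⊆ PA`, i.e. all axioms are `HA`-formulas provable in `PA`. -/
def IsSemiClassical (T : Set Formula) : Prop :=
  ∀ φ ∈ T, φ.noDollar ∧ Proves lemSet φ

mutual
  /-- The class `ℛ_{k+1}` (index `k` denotes `ℛ_{k+1}`). -/
  inductive Rcl : ℕ → Formula → Prop
    | base {k : ℕ} {φ : Formula} : φ.degree ≤ k → φ.noDollar → Rcl k φ
    | and {k : ℕ} {φ ψ : Formula} : Rcl k φ → Rcl k ψ → Rcl k (φ.and ψ)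
    | or {k : ℕ} {φ ψ : Formula} : Rcl k φ → Rcl k ψ → Rcl k (φ.or ψ)
    | all {k : ℕ} {φ : Formula} : Rcl k φ → Rcl k φ.all
    | imp {k : ℕ} {φ ψ : Formula} : Jcl k φ → Rcl k ψ → Rcl k (φ.imp ψ)
  /-- The class `𝒥_{k+1}` (index `k` denotes `𝒥_{k+1}`). -/
  inductive Jcl : ℕ → Formula → Prop
    | base {k : ℕ} {φ : Formula} : φ.degree ≤ k → φ.noDollar → Jcl k φ
    | and {k : ℕ} {φ ψ : Formula} : Jcl k φ → Jcl k ψ → Jcl k (φ.and ψ)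
    | or {k : ℕ} {φ ψ : Formula} : Jcl k φ → Jcl k ψ → Jcl k (φ.or ψ)
    | ex {k : ℕ} {φ : Formula} : Jcl k φ → Jcl k φ.ex
    | imp {k : ℕ} {φ ψ : Formula} : Rcl k φ → Jcl k ψ → Jcl k (φ.imp ψ)
end

/-- The class `𝒬_{k+1}` (index `k` denotes `𝒬_{k+1}`): generated from prime formulas by
`∧, ∨, ∀, ∃` and implications `J → Q` with `J ∈ 𝒥_{k+1}`. -/
inductive Qcl : ℕ → Formula → Prop
  | falsum {k : ℕ} : Qcl k Formula.falsum
  | eq {k : ℕ} {t u : Term} : Qcl k (Formula.eq t u)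
  | and {k : ℕ} {φ ψ : Formula} : Qcl k φ → Qcl k ψ → Qcl k (φ.and ψ)
  | or {k : ℕ} {φ ψ : Formula} : Qcl k φ → Qcl k ψ → Qcl k (φ.or ψ)
  | all {k : ℕ} {φ : Formula} : Qcl k φ → Qcl k φ.all
  | ex {k : ℕ} {φ : Formula} : Qcl k φ → Qcl k φ.ex
  | imp {k : ℕ} {φ ψ : Formula} : Jcl k φ → Qcl k ψ → Qcl k (φ.imp ψ)

/-- The class `𝒱_{k+1}` (index `k` denotes `𝒱_{k+1}`): generated from `𝒥_{k+1}` by `∧, ∀`. -/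
inductive Vcl : ℕ → Formula → Prop
  | ofJ {k : ℕ} {φ : Formula} : Jcl k φ → Vcl k φ
  | and {k : ℕ} {φ ψ : Formula} : Vcl k φ → Vcl k ψ → Vcl k (φ.and ψ)
  | all {k : ℕ} {φ : Formula} : Vcl k φ → Vcl k φ.all

/-- The class `EΠ_k`: generated from `Π_k` formulas by `∨` and `∀`. -/
inductive EPi (k : ℕ) : Formula → Prop
  | ofPi {φ : Formula} : IsPi k φ → EPi k φ
  | or {φ ψ : Formula} : EPi k φ → EPi k ψ → EPi k (φ.or ψ)
  | all {φ : Formula} : EPi k φ → EPi k φ.all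

/-- The class `EΣ_{k+1}` (index `k` denotes `EΣ_{k+1}`): existential quantifications
of `EΠ_k` formulas. -/
inductive ESig (k : ℕ) : Formula → Prop
  | ofEPi {φ : Formula} : EPi k φ → ESig k φ
  | ex {φ : Formula} : ESig k φ → ESig k φ.ex

/-- The scheme `Γ-DNEC`: universal closure of `¬¬φ` implies universal closure of `φ`. -/
def dnecSet (Γ : Set Formula) : Set Formula :=
  {ψ | ∃ φ ∈ Γ, ψ = (φ.neg.neg.univClosure).imp φ.univClosure}

/-- The scheme `Γ-DNSC`: universal closure of `¬¬φ` implies `¬¬` of the universal closure. -/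
def dnscSet (Γ : Set Formula) : Set Formula :=
  {ψ | ∃ φ ∈ Γ, ψ = (φ.neg.neg.univClosure).imp φ.univClosure.neg.neg}

/-- Double-negation elimination for sentences in `Γ`. -/
def dneSentSet (Γ : Set Formula) : Set Formula :=
  {ψ | ∃ φ ∈ Γ, φ.sentence ∧ ψ = φ.neg.neg.imp φ}


set_option maxHeartbeats 1000000

theorem Term.subst_lift (k : ℕ) : ∀ t : Term, Term.subst k (.var k) (t.lift (k+1)) = t := by
  intro t
  induction t with
  | var n =>
      by_cases h : n < k + 1
      · rw [Term.lift, if_pos h, Term.subst]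
        by_cases h2 : n < k
        · rw [if_pos h2]
        · rw [if_neg h2, if_pos (by omega)]; congr 1; omega
      · rw [Term.lift, if_neg h, Term.subst, if_neg (by omega), if_neg (by omega)]
        simp
  | func c a ts ih => rw [Term.lift, Term.subst]; congr 1; funext i; exact ih i

theorem Formula.subst_lift : ∀ (φ : Formula) (k : ℕ),
    Formula.subst k (.var k) (φ.lift (k+1)) = φ := by
  intro φ
  induction φ with
  | falsum => intro k; rfl
  | dollar => intro k; rfl
  | eq t u => intro k; rw [Formula.lift, Formula.subst, Term.subst_lift, Term.subst_lift]
  | and φ ψ ihφ ihψ => intro k; rw [Formula.lift, Formula.subst, ihφ, ihψ]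
  | or φ ψ ihφ ihψ => intro k; rw [Formula.lift, Formula.subst, ihφ, ihψ]
  | imp φ ψ ihφ ihψ => intro k; rw [Formula.lift, Formula.subst, ihφ, ihψ]
  | all φ ih =>
      intro k; rw [Formula.lift, Formula.subst]
      have : (Term.var k).lift 0 = Term.var (k+1) := by
        rw [Term.lift, if_neg (by omega)]
      rw [this, ih (k+1)]
  | ex φ ih =>
      intro k; rw [Formula.lift, Formula.subst]
      have : (Term.var k).lift 0 = Term.var (k+1) := by
        rw [Term.lift, if_neg (by omega)]
      rw [this, ih (k+1)]

theorem Formula.aTr_lift : ∀ (φ : Formula) (d : ℕ), (φ.lift d).aTr = φ.aTr.lift d := by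
  intro φ
  induction φ with
  | falsum => intro d; rfl
  | dollar => intro d; rfl
  | eq t u => intro d; rfl
  | and φ ψ ihφ ihψ => intro d; rw [Formula.lift, Formula.aTr, Formula.aTr, Formula.lift, ihφ, ihψ]
  | or φ ψ ihφ ihψ => intro d; rw [Formula.lift, Formula.aTr, Formula.aTr, Formula.lift, ihφ, ihψ]
  | imp φ ψ ihφ ihψ => intro d; rw [Formula.lift, Formula.aTr, Formula.aTr, Formula.lift, ihφ, ihψ]
  | all φ ih => intro d; rw [Formula.lift, Formula.aTr, Formula.aTr, Formula.lift, ih]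
  | ex φ ih => intro d; rw [Formula.lift, Formula.aTr, Formula.aTr, Formula.lift, ih]

theorem Formula.aTr_subst : ∀ (φ : Formula) (k : ℕ) (s : Term),
    (Formula.subst k s φ).aTr = Formula.subst k s φ.aTr := by
  intro φ
  induction φ with
  | falsum => intros; rfl
  | dollar => intros; rfl
  | eq t u => intros; rfl
  | and φ ψ ihφ ihψ => intro k s; rw [Formula.subst, Formula.aTr, Formula.aTr, Formula.subst, ihφ, ihψ]
  | or φ ψ ihφ ihψ => intro k s; rw [Formula.subst, Formula.aTr, Formula.aTr, Formula.subst, ihφ, ihψ]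
  | imp φ ψ ihφ ihψ => intro k s; rw [Formula.subst, Formula.aTr, Formula.aTr, Formula.subst, ihφ, ihψ]
  | all φ ih => intro k s; rw [Formula.subst, Formula.aTr, Formula.aTr, Formula.subst, ih]
  | ex φ ih => intro k s; rw [Formula.subst, Formula.aTr, Formula.aTr, Formula.subst, ih]

theorem Formula.aTr_repl : ∀ (φ : Formula) (k : ℕ) (s : Term),
    (Formula.repl k s φ).aTr = Formula.repl k s φ.aTr := by
  intro φ
  induction φ with
  | falsum => intros; rfl
  | dollar => intros; rfl
  | eq t u => intros; rfl
  | and φ ψ ihφ ihψ => intro k s; rw [Formula.repl, Formula.aTr, Formula.aTr, Formula.repl, ihφ, ihψ]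
  | or φ ψ ihφ ihψ => intro k s; rw [Formula.repl, Formula.aTr, Formula.aTr, Formula.repl, ihφ, ihψ]
  | imp φ ψ ihφ ihψ => intro k s; rw [Formula.repl, Formula.aTr, Formula.aTr, Formula.repl, ihφ, ihψ]
  | all φ ih => intro k s; rw [Formula.repl, Formula.aTr, Formula.aTr, Formula.repl, ih]
  | ex φ ih => intro k s; rw [Formula.repl, Formula.aTr, Formula.aTr, Formula.repl, ih]

theorem Formula.dual_eq_neg {φ : Formula} (h : φ.isQF) : φ.dual = φ.neg := by
  cases φ <;> first | rfl | exact absurd h (by intro h; exact h)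
section ProofInfra
variable {T : Set Formula}

open Formula

theorem pK (φ ψ : Formula) : Proves T (φ.imp (ψ.imp φ)) := .ha (.axK φ ψ)

theorem pconst {φ : Formula} (ψ : Formula) (h : Proves T φ) : Proves T (ψ.imp φ) :=
  .mp (pK φ ψ) h

theorem pS {φ ψ χ : Formula} (h : Proves T (φ.imp (ψ.imp χ))) (g : Proves T (φ.imp ψ)) :
    Proves T (φ.imp χ) := .mp (.mp (.ha (.axS φ ψ χ)) h) g

theorem pid (φ : Formula) : Proves T (φ.imp φ) :=
  pS (pK φ (φ.imp φ)) (pK φ φ)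

theorem ptrans {φ ψ χ : Formula} (h : Proves T (φ.imp ψ)) (g : Proves T (ψ.imp χ)) :
    Proves T (φ.imp χ) := pS (pconst φ g) h

theorem pthen {ψ χ : Formula} (φ : Formula) (h : Proves T (ψ.imp χ)) :
    Proves T ((φ.imp ψ).imp (φ.imp χ)) := .mp (.ha (.axS φ ψ χ)) (pconst φ h)

/-- Contexts: `ctxImp [h1,…,hn] φ = h1 → … → hn → φ`. -/
def ctxImp : List Formula → Formula → Formula
  | [], φ => φ
  | ψ :: Γ, φ => ψ.imp (ctxImp Γ φ)

theorem cS (Γ : List Formula) (φ ψ : Formula) :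
    Proves T ((ctxImp Γ (φ.imp ψ)).imp ((ctxImp Γ φ).imp (ctxImp Γ ψ))) := by
  induction Γ with
  | nil => exact pid _
  | cons a Γ ih => exact ptrans (pthen a ih) (.ha (.axS a (ctxImp Γ φ) (ctxImp Γ ψ)))

theorem cApp {Γ : List Formula} {φ ψ : Formula} (h : Proves T (ctxImp Γ (φ.imp ψ)))
    (g : Proves T (ctxImp Γ φ)) : Proves T (ctxImp Γ ψ) := .mp (.mp (cS Γ φ ψ) h) g

theorem cThm {φ : Formula} (Γ : List Formula) (h : Proves T φ) : Proves T (ctxImp Γ φ) := by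
  induction Γ with
  | nil => exact h
  | cons a Γ ih => exact pconst a ih

theorem cHyp0 (Γ : List Formula) (φ : Formula) : Proves T (ctxImp (φ :: Γ) φ) := by
  show Proves T (φ.imp (ctxImp Γ φ))
  induction Γ with
  | nil => exact pid φ
  | cons a Γ ih => exact ptrans ih (pK (ctxImp Γ φ) a)

theorem cWk {Γ : List Formula} {ψ : Formula} (φ : Formula) (h : Proves T (ctxImp Γ ψ)) :
    Proves T (ctxImp (φ :: Γ) ψ) := pconst φ h

/-- or-elimination as a rule. -/
theorem porE {φ ψ χ : Formula} (h1 : Proves T (φ.imp χ)) (h2 : Proves T (ψ.imp χ)) :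
    Proves T ((φ.or ψ).imp χ) := .mp (.mp (.ha (.orE φ ψ χ)) h1) h2

/-- or-elimination in a context. -/
theorem cOrE {Γ : List Formula} {φ ψ χ : Formula} (hd : Proves T (ctxImp Γ (φ.or ψ)))
    (h1 : Proves T (ctxImp Γ (φ.imp χ))) (h2 : Proves T (ctxImp Γ (ψ.imp χ))) :
    Proves T (ctxImp Γ χ) :=
  cApp (cApp (cApp (cThm Γ (.ha (.orE φ ψ χ))) h1) h2) hd

theorem pOrI1 (φ ψ : Formula) : Proves T (φ.imp (φ.or ψ)) := .ha (.orI1 φ ψ)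
theorem pOrI2 (φ ψ : Formula) : Proves T (ψ.imp (φ.or ψ)) := .ha (.orI2 φ ψ)

/-- generalization of an implication. -/
theorem genImp {φ ψ : Formula} (h : Proves T (φ.imp ψ)) : Proves T (φ.all.imp ψ.all) :=
  .mp (.ha (.allK φ ψ)) (.gen h)

/-- if `⊢ χ↑ → ψ` then `⊢ χ → ∀ψ`. -/
theorem univImport {χ ψ : Formula} (h : Proves T ((χ.lift 0).imp ψ)) :
    Proves T (χ.imp ψ.all) :=
  ptrans (.ha (.allVac χ)) (genImp h)

/-- if `⊢ φ → ψ↑` then `⊢ ∃φ → ψ`. -/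
theorem exElim {φ ψ : Formula} (h : Proves T (φ.imp (ψ.lift 0))) :
    Proves T (φ.ex.imp ψ) := .mp (.ha (.exE φ ψ)) (.gen h)

/-- `⊢ φ → ∃ φ↑₁` (existential introduction of the formula itself). -/
theorem selfExI (φ : Formula) : Proves T (φ.imp (φ.lift 1).ex) := by
  have := Proves.ha (T := T) (HAAx.exI (φ.lift 1) (.var 0))
  rwa [show Formula.subst 0 (Term.var 0) (φ.lift 1) = φ from Formula.subst_lift φ 0] at this

/-- `⊢ ∀ φ↑₁ → φ` (instantiation at the variable 0). -/
theorem instVar0 (φ : Formula) : Proves T ((φ.lift 1).all.imp φ) := by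
  have := Proves.ha (T := T) (HAAx.allE (φ.lift 1) (.var 0))
  rwa [show Formula.subst 0 (Term.var 0) (φ.lift 1) = φ from Formula.subst_lift φ 0] at this

/-- substitution rule. -/
theorem substRule {φ : Formula} (t : Term) (h : Proves T φ) :
    Proves T (φ.subst 0 t) := .mp (.ha (.allE φ t)) (.gen h)

theorem provesMono {T' : Set Formula} (hT : T ⊆ T') {φ : Formula} (h : Proves T φ) :
    Proves T' φ := by
  induction h with
  | ax h => exact .ax (hT h)
  | ha h => exact .ha h
  | mp _ _ ih1 ih2 => exact .mp ih1 ih2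
  | gen _ ih => exact .gen ih

end ProofInfra

section MoreInfra
variable {T : Set Formula}

theorem cHyp {Γ : List Formula} {φ : Formula} (h : φ ∈ Γ) : Proves T (ctxImp Γ φ) := by
  induction Γ with
  | nil => cases h
  | cons a Γ ih =>
      rcases List.mem_cons.mp h with rfl | h
      · exact cHyp0 Γ φ
      · exact cWk a (ih h)

end MoreInfra
section QF
variable {T : Set Formula}

theorem dollarImpATr : ∀ φ : Formula, Proves T (Formula.dollar.imp φ.aTr) := by
  intro φ
  induction φ with
  | falsum => exact pOrI2 _ _
  | dollar => exact pid _
  | eq t u => exact pOrI2 _ _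
  | and φ ψ ihφ ihψ =>
      exact pS (ptrans ihφ (.ha (.andI φ.aTr ψ.aTr))) ihψ
  | or φ ψ ihφ ihψ => exact ptrans ihφ (pOrI1 _ _)
  | imp φ ψ ihφ ihψ => exact ptrans ihψ (pK ψ.aTr φ.aTr)
  | all φ ih => exact univImport (χ := .dollar) ih
  | ex φ ih =>
      have h1 : Proves T (Formula.dollar.imp (φ.aTr.subst 0 Term.zero)) :=
        substRule Term.zero ih
      exact ptrans h1 (.ha (.exI φ.aTr Term.zero))

theorem qfLEM : ∀ {φ : Formula}, φ.isQF → Proves T (φ.or φ.neg) := by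
  intro φ
  induction φ with
  | falsum => exact fun _ => .mp (pOrI2 _ _) (pid _)
  | dollar => exact fun h => absurd h (by intro h; exact h)
  | eq t u => exact fun _ => .ha (.atomDec t u)
  | and φ ψ ihφ ihψ =>
      intro h
      refine cOrE (Γ := []) (ihφ h.1) ?_ ?_
      · show Proves T (ctxImp [φ] ((φ.and ψ).or (φ.and ψ).neg))
        refine cOrE (cThm _ (ihψ h.2)) ?_ ?_
        · show Proves T (ctxImp [φ, ψ] ((φ.and ψ).or (φ.and ψ).neg))
          exact cApp (cThm _ (pOrI1 _ _))
            (cApp (cApp (cThm _ (.ha (.andI φ ψ))) (cHyp (by simp))) (cHyp (by simp)))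
        · show Proves T (ctxImp [φ, ψ.neg] ((φ.and ψ).or (φ.and ψ).neg))
          refine cApp (cThm _ (pOrI2 _ _)) ?_
          show Proves T (ctxImp [φ, ψ.neg, φ.and ψ] .falsum)
          exact cApp (cHyp (show ψ.neg ∈ _ by simp))
            (cApp (cThm _ (.ha (.andE2 φ ψ))) (cHyp (by simp)))
      · show Proves T (ctxImp [φ.neg] ((φ.and ψ).or (φ.and ψ).neg))
        refine cApp (cThm _ (pOrI2 _ _)) ?_
        show Proves T (ctxImp [φ.neg, φ.and ψ] .falsum)
        exact cApp (cHyp (show φ.neg ∈ _ by simp))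
          (cApp (cThm _ (.ha (.andE1 φ ψ))) (cHyp (by simp)))
  | or φ ψ ihφ ihψ =>
      intro h
      refine cOrE (Γ := []) (ihφ h.1) ?_ ?_
      · exact ptrans (pOrI1 φ ψ) (pOrI1 _ _)
      · show Proves T (ctxImp [φ.neg] ((φ.or ψ).or (φ.or ψ).neg))
        refine cOrE (cThm _ (ihψ h.2)) ?_ ?_
        · exact cThm _ (ptrans (pOrI2 φ ψ) (pOrI1 _ _))
        · show Proves T (ctxImp [φ.neg, ψ.neg] ((φ.or ψ).or (φ.or ψ).neg))
          exact cApp (cThm _ (pOrI2 _ _))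
            (cApp (cApp (cThm _ (.ha (.orE φ ψ .falsum))) (cHyp (by simp [Formula.neg])))
              (cHyp (by simp [Formula.neg])))
  | imp φ ψ ihφ ihψ =>
      intro h
      refine cOrE (Γ := []) (ihψ h.2) ?_ ?_
      · exact ptrans (pK ψ φ) (pOrI1 _ _)
      · show Proves T (ctxImp [ψ.neg] ((φ.imp ψ).or (φ.imp ψ).neg))
        refine cOrE (cThm _ (ihφ h.1)) ?_ ?_
        · show Proves T (ctxImp [ψ.neg, φ] ((φ.imp ψ).or (φ.imp ψ).neg))
          refine cApp (cThm _ (pOrI2 _ _)) ?_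
          show Proves T (ctxImp [ψ.neg, φ, φ.imp ψ] .falsum)
          exact cApp (cHyp (show ψ.neg ∈ _ by simp))
            (cApp (cHyp (show φ.imp ψ ∈ _ by simp)) (cHyp (show φ ∈ _ by simp)))
        · exact cThm _ (ptrans (pthen φ (.ha (.efq ψ))) (pOrI1 _ _))
  | all φ ih => exact fun h => absurd h (by intro h; exact h)
  | ex φ ih => exact fun h => absurd h (by intro h; exact h)

theorem qfATr : ∀ {φ : Formula}, φ.isQF →
    Proves T (φ.imp φ.aTr) ∧ Proves T (φ.aTr.imp (φ.or .dollar)) := by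
  intro φ
  induction φ with
  | falsum => exact fun _ => ⟨pOrI1 _ _, pid _⟩
  | dollar => exact fun h => absurd h (by intro h; exact h)
  | eq t u => exact fun _ => ⟨pOrI1 _ _, pid _⟩
  | and φ ψ ihφ ihψ =>
      intro h
      obtain ⟨a1, b1⟩ := ihφ h.1
      obtain ⟨a2, b2⟩ := ihψ h.2
      constructor
      · exact pS (ptrans (ptrans (.ha (.andE1 φ ψ)) a1) (.ha (.andI φ.aTr ψ.aTr)))
          (ptrans (.ha (.andE2 φ ψ)) a2)
      · show Proves T (ctxImp [φ.aTr.and ψ.aTr] ((φ.and ψ).or .dollar))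
        refine cOrE (cApp (cThm _ b1) (cApp (cThm _ (.ha (.andE1 φ.aTr ψ.aTr))) (cHyp (by simp)))) ?_ ?_
        · show Proves T (ctxImp [φ.aTr.and ψ.aTr, φ] ((φ.and ψ).or .dollar))
          refine cOrE (cApp (cThm _ b2)
              (cApp (cThm _ (.ha (.andE2 φ.aTr ψ.aTr))) (cHyp (by simp)))) ?_ ?_
          · show Proves T (ctxImp [φ.aTr.and ψ.aTr, φ, ψ] ((φ.and ψ).or .dollar))
            exact cApp (cThm _ (pOrI1 _ _))
              (cApp (cApp (cThm _ (.ha (.andI φ ψ))) (cHyp (by simp))) (cHyp (by simp)))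
          · exact cThm _ (pOrI2 _ _)
        · exact cThm _ (pOrI2 _ _)
  | or φ ψ ihφ ihψ =>
      intro h
      obtain ⟨a1, b1⟩ := ihφ h.1
      obtain ⟨a2, b2⟩ := ihψ h.2
      constructor
      · exact porE (ptrans a1 (pOrI1 _ _)) (ptrans a2 (pOrI2 _ _))
      · exact porE (ptrans b1 (porE (ptrans (pOrI1 φ ψ) (pOrI1 _ _)) (pOrI2 _ _)))
          (ptrans b2 (porE (ptrans (pOrI2 φ ψ) (pOrI1 _ _)) (pOrI2 _ _)))
  | imp φ ψ ihφ ihψ =>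
      intro h
      obtain ⟨a1, b1⟩ := ihφ h.1
      obtain ⟨a2, b2⟩ := ihψ h.2
      constructor
      · show Proves T (ctxImp [φ.imp ψ, φ.aTr] ψ.aTr)
        refine cOrE (cApp (cThm _ b1) (cHyp (by simp))) ?_ ?_
        · show Proves T (ctxImp [φ.imp ψ, φ.aTr, φ] ψ.aTr)
          exact cApp (cThm _ a2)
            (cApp (cHyp (show φ.imp ψ ∈ _ by simp)) (cHyp (show φ ∈ _ by simp)))
        · exact cThm _ (dollarImpATr ψ)
      · show Proves T (ctxImp [φ.aTr.imp ψ.aTr] ((φ.imp ψ).or .dollar))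
        refine cOrE (cThm _ (qfLEM h.1)) ?_ ?_
        · show Proves T (ctxImp [φ.aTr.imp ψ.aTr, φ] ((φ.imp ψ).or .dollar))
          refine cOrE (cApp (cThm _ b2) (cApp (cHyp (show φ.aTr.imp ψ.aTr ∈ _ by simp))
              (cApp (cThm _ a1) (cHyp (show φ ∈ _ by simp))))) ?_ ?_
          · show Proves T (ctxImp [φ.aTr.imp ψ.aTr, φ, ψ] ((φ.imp ψ).or .dollar))
            exact cApp (cThm _ (ptrans (pK ψ φ) (pOrI1 _ _))) (cHyp (by simp))
          · exact cThm _ (pOrI2 _ _)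
        · exact cThm _ (ptrans (pthen φ (.ha (.efq ψ))) (pOrI1 _ _))
  | all φ ih => exact fun h => absurd h (by intro h; exact h)
  | ex φ ih => exact fun h => absurd h (by intro h; exact h)

end QF
section HATr
variable {T : Set Formula}

theorem pswap {φ ψ χ : Formula} (h : Proves T (φ.imp (ψ.imp χ))) :
    Proves T (ψ.imp (φ.imp χ)) := by
  show Proves T (ctxImp [ψ, φ] χ)
  exact cApp (cApp (cThm _ h) (cHyp (by simp))) (cHyp (by simp))

theorem haATr {φ : Formula} (h : HAAx φ) : Proves T φ.aTr := by
  cases h with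
  | axK φ ψ => exact .ha (.axK φ.aTr ψ.aTr)
  | axS φ ψ χ => exact .ha (.axS φ.aTr ψ.aTr χ.aTr)
  | andI φ ψ => exact .ha (.andI φ.aTr ψ.aTr)
  | andE1 φ ψ => exact .ha (.andE1 φ.aTr ψ.aTr)
  | andE2 φ ψ => exact .ha (.andE2 φ.aTr ψ.aTr)
  | orI1 φ ψ => exact .ha (.orI1 φ.aTr ψ.aTr)
  | orI2 φ ψ => exact .ha (.orI2 φ.aTr ψ.aTr)
  | orE φ ψ χ => exact .ha (.orE φ.aTr ψ.aTr χ.aTr)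
  | efq φ => exact porE (.ha (.efq φ.aTr)) (dollarImpATr φ)
  | allE φ t =>
      show Proves T (φ.aTr.all.imp (φ.subst 0 t).aTr)
      rw [Formula.aTr_subst]
      exact .ha (.allE φ.aTr t)
  | exI φ t =>
      show Proves T ((φ.subst 0 t).aTr.imp φ.aTr.ex)
      rw [Formula.aTr_subst]
      exact .ha (.exI φ.aTr t)
  | allK φ ψ => exact .ha (.allK φ.aTr ψ.aTr)
  | allVac φ =>
      show Proves T (φ.aTr.imp ((φ.lift 0).aTr).all)
      rw [Formula.aTr_lift]
      exact .ha (.allVac φ.aTr)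
  | exE φ ψ =>
      show Proves T (((φ.aTr.imp ((ψ.lift 0).aTr)).all).imp (φ.aTr.ex.imp ψ.aTr))
      rw [Formula.aTr_lift]
      exact .ha (.exE φ.aTr ψ.aTr)
  | eqRefl t => exact .mp (pOrI1 _ _) (.ha (.eqRefl t))
  | eqSubst t u φ =>
      show Proves T (((Formula.eq t u).or .dollar).imp
        ((φ.subst 0 t).aTr.imp ((φ.subst 0 u).aTr)))
      rw [Formula.aTr_subst, Formula.aTr_subst]
      have hd : Proves T (Formula.dollar.imp (Formula.subst 0 u φ.aTr)) := by
        have := dollarImpATr (T := T) (φ.subst 0 u)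
        rwa [Formula.aTr_subst] at this
      exact porE (.ha (.eqSubst t u φ.aTr)) (ptrans hd (pK _ _))
  | succNeZero t => exact porE (ptrans (.ha (.succNeZero t)) (pOrI1 _ _)) (pOrI2 _ _)
  | succInj t u => exact porE (ptrans (.ha (.succInj t u)) (pOrI1 _ _)) (pOrI2 _ _)
  | ind φ =>
      show Proves T ((Formula.subst 0 Term.zero φ).aTr.imp
        (((φ.aTr.imp ((φ.repl 0 (Term.succ (Term.var 0))).aTr)).all).imp φ.aTr.all))
      rw [Formula.aTr_subst, Formula.aTr_repl]
      exact .ha (.ind φ.aTr)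
  | atomDec t u =>
      refine cOrE (Γ := []) (.ha (.atomDec t u)) ?_ ?_
      · exact ptrans (pOrI1 _ Formula.dollar) (pOrI1 _ _)
      · show Proves T (ctxImp [(Formula.eq t u).neg]
          (((Formula.eq t u).or .dollar).or
            (((Formula.eq t u).or .dollar).imp (Formula.falsum.or .dollar))))
        refine cApp (cThm _ (pOrI2 _ _)) ?_
        show Proves T (ctxImp [(Formula.eq t u).neg, (Formula.eq t u).or .dollar]
          (Formula.falsum.or .dollar))
        refine cOrE (φ := Formula.eq t u) (ψ := .dollar) (cHyp (by simp)) ?_ ?_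
        · show Proves T (ctxImp [(Formula.eq t u).neg, (Formula.eq t u).or .dollar,
            Formula.eq t u] (Formula.falsum.or .dollar))
          exact cApp (cThm _ (pOrI1 _ _))
            (cApp (φ := Formula.eq t u) (cHyp (by simp [Formula.neg])) (cHyp (by simp)))
        · exact cThm _ (pOrI2 _ _)

end HATr

section SigPi

/-- Mutual induction principle for `IsSigma`/`IsPi`. -/
theorem sigPiInd {MS MP : ℕ → Formula → Prop}
    (h1 : ∀ {φ : Formula}, φ.isQF → MS 0 φ)
    (h2 : ∀ {k : ℕ} {φ : Formula}, IsPi k φ → MP k φ → MS (k+1) φ)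
    (h3 : ∀ {k : ℕ} {φ : Formula}, IsSigma (k+1) φ → MS (k+1) φ → MS (k+1) φ.ex)
    (h4 : ∀ {φ : Formula}, φ.isQF → MP 0 φ)
    (h5 : ∀ {k : ℕ} {φ : Formula}, IsSigma k φ → MS k φ → MP (k+1) φ)
    (h6 : ∀ {k : ℕ} {φ : Formula}, IsPi (k+1) φ → MP (k+1) φ → MP (k+1) φ.all) :
    (∀ {k : ℕ} {φ : Formula}, IsSigma k φ → MS k φ) ∧
      (∀ {k : ℕ} {φ : Formula}, IsPi k φ → MP k φ) :=
  ⟨fun h => IsSigma.rec (motive_1 := fun k φ _ => MS k φ) (motive_2 := fun k φ _ => MP k φ)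
      (fun a => h1 a) (fun a ih => h2 a ih) (fun a ih => h3 a ih)
      (fun a => h4 a) (fun a ih => h5 a ih) (fun a ih => h6 a ih) h,
   fun h => IsPi.rec (motive_1 := fun k φ _ => MS k φ) (motive_2 := fun k φ _ => MP k φ)
      (fun a => h1 a) (fun a ih => h2 a ih) (fun a ih => h3 a ih)
      (fun a => h4 a) (fun a ih => h5 a ih) (fun a ih => h6 a ih) h⟩

theorem sigPiSucc :
    (∀ {k : ℕ} {φ : Formula}, IsSigma k φ → IsSigma (k+1) φ) ∧
      (∀ {k : ℕ} {φ : Formula}, IsPi k φ → IsPi (k+1) φ) :=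
  sigPiInd (MS := fun k φ => IsSigma (k+1) φ) (MP := fun k φ => IsPi (k+1) φ)
    (fun h => .ofPi (.qf h)) (fun _ ih => .ofPi ih) (fun _ ih => .ex ih)
    (fun h => .ofSigma (.qf h)) (fun _ ih => .ofSigma ih) (fun _ ih => .all ih)

theorem sigLEM_mono {k : ℕ} {φ : Formula} (h : Proves (sigLEM k) φ) :
    Proves (sigLEM (k+1)) φ := by
  refine provesMono ?_ h
  rintro ψ ⟨χ, hχ, rfl⟩
  exact ⟨χ, sigPiSucc.1 hχ, rfl⟩

theorem isQF_neg {φ : Formula} (h : φ.isQF) : φ.neg.isQF := ⟨h, trivial⟩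

theorem dualD :
    (∀ {k : ℕ} {φ : Formula}, IsSigma k φ → IsPi k φ.dual) ∧
      (∀ {k : ℕ} {φ : Formula}, IsPi k φ → IsSigma k φ.dual) :=
  sigPiInd (MS := fun k φ => IsPi k φ.dual) (MP := fun k φ => IsSigma k φ.dual)
    (fun {φ} h => by simp only [Formula.dual_eq_neg h]; exact IsPi.qf (isQF_neg h))
    (fun _ ih => .ofSigma ih) (fun _ ih => .all ih)
    (fun {φ} h => by simp only [Formula.dual_eq_neg h]; exact IsSigma.qf (isQF_neg h))
    (fun _ ih => .ofPi ih) (fun _ ih => .ex ih)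

variable {T : Set Formula}

/-- The dual of a prenex formula implies its negation. -/
theorem dualNeg :
    (∀ {k : ℕ} {φ : Formula}, IsSigma k φ → Proves T (φ.dual.imp φ.neg)) ∧
      (∀ {k : ℕ} {φ : Formula}, IsPi k φ → Proves T (φ.dual.imp φ.neg)) := by
  refine sigPiInd ?_ (fun _ ih => ih) ?_ ?_ (fun _ ih => ih) ?_
  · intro φ h; rw [Formula.dual_eq_neg h]; exact pid _
  · -- ex case : ⊢ ∀φᵈ → ¬∃φ
    intro k φ _ ih
    refine pswap (exElim (ψ := (φ.dual.all).imp .falsum) ?_)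
    show Proves T (ctxImp [φ, (φ.dual.lift 1).all] Formula.falsum)
    exact cApp (cApp (cThm _ ih) (cApp (cThm _ (instVar0 φ.dual)) (cHyp (by simp))))
      (cHyp (by simp))
  · intro φ h; rw [Formula.dual_eq_neg h]; exact pid _
  · -- all case : ⊢ ∃φᵈ → ¬∀φ
    intro k φ _ ih
    refine exElim (ψ := (φ.all).imp .falsum) ?_
    show Proves T (ctxImp [φ.dual, (φ.lift 1).all] Formula.falsum)
    exact cApp (cApp (cThm _ ih) (cHyp (by simp)))
      (cApp (cThm _ (instVar0 φ)) (cHyp (by simp)))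

/-- Dual-form LEM: `Σ_k-LEM ⊢ φ ∨ φᵈ` for `φ ∈ Σ_k ∪ Π_k`. -/
theorem dualLEM :
    (∀ {k : ℕ} {φ : Formula}, IsSigma k φ → Proves (sigLEM k) (φ.or φ.dual)) ∧
      (∀ {k : ℕ} {φ : Formula}, IsPi k φ → Proves (sigLEM k) (φ.or φ.dual)) := by
  refine sigPiInd ?_ (fun _ ih => sigLEM_mono ih) ?_ ?_ (fun _ ih => sigLEM_mono ih) ?_
  · intro φ h; rw [Formula.dual_eq_neg h]; exact qfLEM h
  · -- Σ ex case
    intro k φ hσ ih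
    have lemInst : Proves (sigLEM (k+1)) ((φ.ex).or (φ.ex).neg) := .ax ⟨φ.ex, .ex hσ, rfl⟩
    refine cOrE (Γ := []) lemInst (pOrI1 _ _) ?_
    refine ptrans (univImport (χ := (φ.ex).neg) ?_) (pOrI2 _ _)
    show Proves (sigLEM (k+1)) (ctxImp [(( φ.lift 1).ex).imp .falsum] φ.dual)
    refine cOrE (cThm _ ih) ?_ (cThm _ (pid _))
    show Proves (sigLEM (k+1)) (ctxImp [(( φ.lift 1).ex).imp .falsum, φ] φ.dual)
    exact cApp (cThm _ (.ha (.efq φ.dual)))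
      (cApp (cHyp (by simp)) (cApp (cThm _ (selfExI φ)) (cHyp (by simp))))
  · intro φ h; rw [Formula.dual_eq_neg h]; exact qfLEM h
  · -- Π all case
    intro k φ hπ ih
    have lemInst : Proves (sigLEM (k+1)) ((φ.dual.ex).or (φ.dual.ex).neg) :=
      .ax ⟨φ.dual.ex, .ex (dualD.2 hπ), rfl⟩
    refine cOrE (Γ := []) lemInst (pOrI2 _ _) ?_
    refine ptrans (univImport (χ := (φ.dual.ex).neg) ?_) (pOrI1 _ _)
    show Proves (sigLEM (k+1)) (ctxImp [(((φ.dual.lift 1).ex).imp .falsum)] φ)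
    refine cOrE (cThm _ ih) (cThm _ (pid _)) ?_
    show Proves (sigLEM (k+1)) (ctxImp [(((φ.dual.lift 1).ex).imp .falsum), φ.dual] φ)
    exact cApp (cThm _ (.ha (.efq φ)))
      (cApp (cHyp (by simp)) (cApp (cThm _ (selfExI φ.dual)) (cHyp (by simp))))

/-- Forward direction: prenex `φ` implies its A-translation. -/
theorem prenexImpATr :
    (∀ {k : ℕ} {φ : Formula}, IsSigma k φ → Proves T (φ.imp φ.aTr)) ∧
      (∀ {k : ℕ} {φ : Formula}, IsPi k φ → Proves T (φ.imp φ.aTr)) := by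
  refine sigPiInd ?_ (fun _ ih => ih) ?_ ?_ (fun _ ih => ih) ?_
  · exact fun h => (qfATr h).1
  · intro k φ _ ih
    exact exElim (ψ := φ.aTr.ex) (ptrans ih (selfExI φ.aTr))
  · exact fun h => (qfATr h).1
  · exact fun _ ih => genImp ih

/-- Backward direction: the A-translation of prenex `φ` implies `φ ∨ $`, using LEM. -/
theorem aTrImpOr :
    (∀ {k : ℕ} {φ : Formula}, IsSigma k φ → Proves (sigLEM k) (φ.aTr.imp (φ.or .dollar))) ∧
      (∀ {k : ℕ} {φ : Formula}, IsPi k φ → Proves (sigLEM k) (φ.aTr.imp (φ.or .dollar))) := by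
  refine sigPiInd ?_ (fun _ ih => sigLEM_mono ih) ?_ ?_ (fun _ ih => sigLEM_mono ih) ?_
  · exact fun h => (qfATr h).2
  · -- Σ ex case
    intro k φ _ ih
    refine exElim (ψ := (φ.ex).or .dollar) ?_
    exact ptrans ih (porE (ptrans (selfExI φ) (pOrI1 _ _)) (pOrI2 _ _))
  · exact fun h => (qfATr h).2
  · -- Π all case
    intro k φ hπ ih
    refine cOrE (Γ := []) (dualLEM.2 (IsPi.all hπ)) ?_ ?_
    · exact ptrans (pOrI1 _ .dollar) (pK _ φ.aTr.all)
    · refine exElim (ψ := (φ.aTr.all).imp ((φ.all).or .dollar)) ?_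
      show Proves (sigLEM (k+1)) (ctxImp [φ.dual, (φ.aTr.lift 1).all]
        (((φ.lift 1).all).or .dollar))
      have hφor : Proves (sigLEM (k+1)) (ctxImp [φ.dual, (φ.aTr.lift 1).all]
          (φ.or .dollar)) :=
        cApp (cThm _ ih) (cApp (cThm _ (instVar0 φ.aTr)) (cHyp (by simp)))
      refine cOrE hφor ?_ (cThm _ (pOrI2 _ _))
      show Proves (sigLEM (k+1)) (ctxImp [φ.dual, (φ.aTr.lift 1).all, φ]
        (((φ.lift 1).all).or .dollar))
      exact cApp (cThm _ (.ha (.efq _)))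
        (cApp (cApp (cThm _ (dualNeg.2 hπ)) (cHyp (by simp))) (cHyp (by simp)))

end SigPi
/-- soundness of the Friedman A-translation for `HA + Σ_k-LEM`:
if `HA + Σ_k-LEM ⊢ φ` then `HA^* + Σ_k-LEM ⊢ φ^*`. -/
theorem aTr_sound (k : ℕ) (φ : Formula) (hφ : φ.noDollar)
    (h : Proves (sigLEM k) φ) : Proves (sigLEM k) φ.aTr := by
  clear hφ
  induction h with
  | ax h =>
      obtain ⟨ψ, hψ, rfl⟩ := h
      show Proves (sigLEM k) (ψ.aTr.or (ψ.aTr.imp (Formula.falsum.or .dollar)))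
      have l1 : Proves (sigLEM k) (ψ.imp ψ.aTr) := prenexImpATr.1 hψ
      have l2 : Proves (sigLEM k) (ψ.aTr.imp (ψ.or .dollar)) := aTrImpOr.1 hψ
      refine cOrE (Γ := []) (.ax ⟨ψ, hψ, rfl⟩) (ptrans l1 (pOrI1 _ _)) ?_
      refine ptrans ?_ (pOrI2 _ _)
      show Proves (sigLEM k) (ctxImp [ψ.neg, ψ.aTr] (Formula.falsum.or .dollar))
      refine cOrE (cApp (cThm _ l2) (cHyp (by simp))) ?_ (cThm _ (pOrI2 _ _))
      show Proves (sigLEM k) (ctxImp [ψ.neg, ψ.aTr, ψ] (Formula.falsum.or .dollar))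
      exact cApp (cThm _ (pOrI1 _ _))
        (cApp (φ := ψ) (cHyp (by simp [Formula.neg])) (cHyp (by simp)))
  | ha h => exact haATr h
  | mp _ _ ih1 ih2 => exact .mp ih1 ih2
  | gen _ ih => exact .gen ih

end SemiClassicalArith
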